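/- For a shifted intersecting family F ⊆ {S ⊆ [n] : |S| = k} (n ≥ 2k > 0), the degree of element 1 equals the maximum degree: δ₁(F) = Δ(F). -/

import Mathlib

open Finset

/-- For a shifted intersecting family `F` of `k`-subsets of `[n]` with `n ≥ 2k > 0`,
the degree of element `1` equals the maximum degree. -/
theorem shifted_max_degree_at_one (n k : ℕ) (hk : 0 < k) (hn : 2 * k ≤ n)
    (F : Finset (Finset ℕ)) (hF : F ⊆ (Icc 1 n).powersetCard k)
    (hint : ∀ A ∈ F, ∀ B ∈ F, (A ∩ B).Nonempty)
    (hshift : ∀ i j : ℕ, 1 ≤ i → i < j → j ≤ n →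
      ∀ A ∈ F, j ∈ A → i ∉ A → insert i (A.erase j) ∈ F) :
    (F.filter (fun A => 1 ∈ A)).card =
      (Icc 1 n).sup (fun i => (F.filter (fun A => i ∈ A)).card) := by
  have hn1 : 1 ≤ n := le_trans (by omega) hn
  apply le_antisymm
  · exact Finset.le_sup (f := fun i => (F.filter (fun A => i ∈ A)).card) (mem_Icc.mpr ⟨le_rfl, hn1⟩)
  · apply Finset.sup_le
    intro i hi
    simp only [mem_Icc] at hi
    rcases eq_or_lt_of_le hi.1 with h1 | h1
    · rw [← h1]
    -- i > 1 case: injection from {A : i ∈ A, 1 ∉ A} to {A : 1 ∈ A, i ∉ A}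
    have key : ((F.filter (fun A => i ∈ A)).filter (fun A => 1 ∉ A)).card ≤
        ((F.filter (fun A => 1 ∈ A)).filter (fun A => i ∉ A)).card := by
      apply Finset.card_le_card_of_injOn (fun A => insert 1 (A.erase i))
      · intro A hA
        simp only [coe_filter, Set.mem_setOf_eq, mem_coe, mem_filter] at hA ⊢
        obtain ⟨⟨hAF, hiA⟩, h1A⟩ := hA
        refine ⟨⟨hshift 1 i le_rfl h1 hi.2 A hAF hiA h1A, by simp⟩, ?_⟩
        simp only [mem_insert, mem_erase]
        push_neg
        exact ⟨by omega, fun h => absurd rfl h⟩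
      · intro A hA B hB hAB
        simp only [coe_filter, Set.mem_setOf_eq, mem_filter] at hA hB
        have hA' : A = insert i ((insert 1 (A.erase i)).erase 1) := by
          rw [Finset.erase_insert (by simp [hA.2]), Finset.insert_erase hA.1.2]
        have hB' : B = insert i ((insert 1 (B.erase i)).erase 1) := by
          rw [Finset.erase_insert (by simp [hB.2]), Finset.insert_erase hB.1.2]
        simp only at hAB
        rw [hA', hB', hAB]
    have split1 := Finset.card_filter_add_card_filter_not
      (s := F.filter (fun A => i ∈ A)) (p := fun A => 1 ∈ A)
    have split2 := Finset.card_filter_add_card_filter_not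
      (s := F.filter (fun A => 1 ∈ A)) (p := fun A => i ∈ A)
    have comm : ((F.filter (fun A => i ∈ A)).filter (fun A => 1 ∈ A)).card =
        ((F.filter (fun A => 1 ∈ A)).filter (fun A => i ∈ A)).card := by
      rw [Finset.filter_filter, Finset.filter_filter]
      congr 1
      ext A
      simp only [mem_filter]
      tauto
    omega
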